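/- Let t, h, c₁, c₂ be fixed reals with h > 0, and let z₀, z₁, z₂, z₃ be distinct nonzero reals. Suppose perturbed values ẑᵢ satisfy ẑ₀ = z₀ + O(h⁵), ẑ₁ = z₁ + O(h³), ẑ₂ = z₂ + O(h³), ẑ₃ = z₃ + O(h⁵) (i.e., |ẑᵢ - zᵢ| ≤ Cᵢ h^{pᵢ} with p₀ = p₃ = 5, p₁ = p₂ = 3, for h small enough that the ẑᵢ remain distinct and nonzero). Then the value at 0 of the cubic Lagrange interpolation polynomial through the nodes (ẑᵢ, tᵢ) (where t₀ = t, t₁ = t + c₁h, t₂ = t + c₂h, t₃ = t + h) differs from the value at 0 of the polynomial through ((zᵢ), (tᵢ)) by O(h³): there exist constants C, h₀ > 0 such that the difference is bounded by C h³ for all 0 < h < h₀. -/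

import Mathlib

set_option maxHeartbeats 1000000

open Finset

/-- Perturbation estimate for the inverse Lagrange interpolation in RADAU5: perturbing the
node values `zᵢ` by `O(h⁵), O(h³), O(h³), O(h⁵)` changes the evaluation at `0` of the cubic
inverse-interpolation polynomial (with times `t, t+c₁h, t+c₂h, t+h`) by `O(h³)`. -/
theorem stmt_8 (t c₁ c₂ : ℝ) (z : Fin 4 → ℝ)
    (hzinj : Function.Injective z) (hz0 : ∀ i, z i ≠ 0)
    (zh : Fin 4 → ℝ → ℝ) (p : Fin 4 → ℕ)
    (hp : p 0 = 5 ∧ p 1 = 3 ∧ p 2 = 3 ∧ p 3 = 5)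
    (Cb : Fin 4 → ℝ)
    (hCb : ∀ i h, 0 < h → |zh i h - z i| ≤ Cb i * h ^ p i)
    (h₁ : ℝ) (hh₁ : 0 < h₁)
    (hdist : ∀ h, 0 < h → h < h₁ →
      Function.Injective (fun i => zh i h) ∧ ∀ i, zh i h ≠ 0)
    (tn : Fin 4 → ℝ → ℝ)
    (htn : ∀ h, tn 0 h = t ∧ tn 1 h = t + c₁ * h ∧ tn 2 h = t + c₂ * h ∧ tn 3 h = t + h) :
    ∃ C h₀ : ℝ, 0 < C ∧ 0 < h₀ ∧ ∀ h, 0 < h → h < h₀ →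
      |(∑ i, (∏ j ∈ Finset.univ.erase i, (0 - zh j h) / (zh i h - zh j h)) * tn i h) -
       (∑ i, (∏ j ∈ Finset.univ.erase i, (0 - z j) / (z i - z j)) * tn i h)| ≤ C * h ^ 3 := by
  classical
  set w : Fin 4 → (Fin 4 → ℝ) → ℝ :=
    fun i v => ∏ j ∈ Finset.univ.erase i, (0 - v j) / (v i - v j) with hw
  -- each w i is C¹ at z
  have hcd : ∀ i, ContDiffAt ℝ 1 (w i) z := by
    intro i
    apply contDiffAt_prod
    intro j hj
    have hij : j ≠ i := Finset.ne_of_mem_erase hj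
    have hden : z i - z j ≠ 0 := sub_ne_zero.2 fun e => hij (hzinj e.symm)
    exact ContDiffAt.div
      ((contDiff_const.sub (contDiff_apply ℝ ℝ j)).contDiffAt)
      (((contDiff_apply ℝ ℝ i).sub (contDiff_apply ℝ ℝ j)).contDiffAt) hden
  -- local Lipschitz bounds
  have key : ∀ i : Fin 4, ∃ K ε : ℝ, 0 ≤ K ∧ 0 < ε ∧ ∀ v : Fin 4 → ℝ,
      dist v z < ε → |w i v - w i z| ≤ K * dist v z := by
    intro i
    obtain ⟨K, s, hs, hK⟩ := (hcd i).exists_lipschitzOnWith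
    obtain ⟨ε, hε, hball⟩ := Metric.mem_nhds_iff.1 hs
    refine ⟨K, ε, K.coe_nonneg, hε, fun v hv => ?_⟩
    have := hK.dist_le_mul v (hball hv) z (hball (Metric.mem_ball_self hε))
    simpa [Real.dist_eq] using this
  choose K ε hK0 hε hKle using key
  have hCbnn : ∀ i, 0 ≤ Cb i := by
    intro i
    have := hCb i 1 one_pos
    have h0 := abs_nonneg (zh i 1 - z i)
    simpa using h0.trans this
  set B : ℝ := max (max (Cb 0) (Cb 1)) (max (Cb 2) (Cb 3)) with hB
  have hB0 : 0 ≤ B := le_trans (hCbnn 0) (le_max_left _ _ |>.trans (le_max_left _ _))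
  have hBi : ∀ i, Cb i ≤ B := by
    intro i; fin_cases i
    · exact (le_max_left _ _).trans (le_max_left _ _)
    · exact (le_max_right _ _).trans (le_max_left _ _)
    · exact (le_max_left _ _).trans (le_max_right _ _)
    · exact (le_max_right _ _).trans (le_max_right _ _)
  set ε₀ : ℝ := min (min (ε 0) (ε 1)) (min (ε 2) (ε 3)) with hε₀def
  have hε₀ : 0 < ε₀ := lt_min (lt_min (hε 0) (hε 1)) (lt_min (hε 2) (hε 3))
  have hε₀i : ∀ i, ε₀ ≤ ε i := by
    intro i; fin_cases i
    · exact (min_le_left _ _).trans (min_le_left _ _)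
    · exact (min_le_left _ _).trans (min_le_right _ _)
    · exact (min_le_right _ _).trans (min_le_left _ _)
    · exact (min_le_right _ _).trans (min_le_right _ _)
  set M : ℝ := |t| + (|c₁| + |c₂| + 1) * h₁ with hM
  have hM0 : 0 ≤ M := by positivity
  set Ks : ℝ := K 0 + K 1 + K 2 + K 3 with hKs
  have hKs0 : 0 ≤ Ks := by
    have := hK0 0; have := hK0 1; have := hK0 2; have := hK0 3
    simp only [hKs]; linarith
  refine ⟨M * Ks * B + 1, min h₁ (min 1 (ε₀ / (B + 1))), by positivity,
    lt_min hh₁ (lt_min one_pos (by positivity)), fun h hh hhlt => ?_⟩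
  have hhh₁ : h < h₁ := hhlt.trans_le (min_le_left _ _)
  have hh1 : h < 1 := hhlt.trans_le ((min_le_right _ _).trans (min_le_left _ _))
  have hhe : h < ε₀ / (B + 1) := hhlt.trans_le ((min_le_right _ _).trans (min_le_right _ _))
  set v : Fin 4 → ℝ := fun j => zh j h with hv
  -- distance bound
  have hpge : ∀ j, 3 ≤ p j := by
    intro j; fin_cases j <;> simp [hp.1, hp.2.1, hp.2.2.1, hp.2.2.2]
  have hd : dist v z ≤ B * h ^ 3 := by
    rw [dist_pi_le_iff (by positivity)]
    intro j
    rw [Real.dist_eq]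
    calc |v j - z j| ≤ Cb j * h ^ p j := hCb j h hh
      _ ≤ B * h ^ 3 := by
        apply mul_le_mul (hBi j) (pow_le_pow_of_le_one hh.le hh1.le (hpge j))
          (by positivity) hB0
  have hdlt : dist v z < ε₀ := by
    have hhh : h * h ≤ 1 := mul_le_one₀ hh1.le hh.le hh1.le
    have h3le : h ^ 3 ≤ h := by nlinarith
    have : (B + 1) * h < ε₀ := by
      have := (lt_div_iff₀ (by positivity : (0:ℝ) < B + 1)).1 hhe
      linarith [this]
    nlinarith [hd, hB0, hh]
  -- bound on tn
  have htnM : ∀ i, |tn i h| ≤ M := by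
    intro i
    obtain ⟨e0, e1, e2, e3⟩ := htn h
    have hab : ∀ c : ℝ, |t + c * h| ≤ |t| + |c| * h₁ := by
      intro c
      calc |t + c * h| ≤ |t| + |c * h| := abs_add_le _ _
        _ = |t| + |c| * h := by rw [abs_mul, abs_of_pos hh]
        _ ≤ |t| + |c| * h₁ := by nlinarith [abs_nonneg c, hhh₁]
    fin_cases i
    · show |tn 0 h| ≤ M
      rw [e0]; simp only [hM]; nlinarith [abs_nonneg c₁, abs_nonneg c₂]
    · show |tn 1 h| ≤ M
      rw [e1]
      have := hab c₁
      simp only [hM]; nlinarith [abs_nonneg c₂]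
    · show |tn 2 h| ≤ M
      rw [e2]
      have := hab c₂
      simp only [hM]; nlinarith [abs_nonneg c₁]
    · show |tn 3 h| ≤ M
      rw [e3]
      have := hab 1
      simp only [hM]; simp at this; nlinarith [abs_nonneg c₁, abs_nonneg c₂]
  -- main estimate
  have hterm : ∀ i : Fin 4, |w i v * tn i h - w i z * tn i h| ≤ M * (K i * dist v z) := by
    intro i
    rw [← sub_mul, abs_mul, mul_comm]
    exact mul_le_mul (htnM i) (hKle i v (hdlt.trans_le (hε₀i i))) (abs_nonneg _) hM0
  calc |(∑ i, w i v * tn i h) - ∑ i, w i z * tn i h|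
      = |∑ i : Fin 4, (w i v * tn i h - w i z * tn i h)| := by
        rw [Finset.sum_sub_distrib]
    _ ≤ ∑ i : Fin 4, |w i v * tn i h - w i z * tn i h| := Finset.abs_sum_le_sum_abs _ _
    _ ≤ ∑ i : Fin 4, M * (K i * dist v z) := Finset.sum_le_sum fun i _ => hterm i
    _ = M * Ks * dist v z := by rw [Fin.sum_univ_four]; simp only [hKs]; ring
    _ ≤ M * Ks * (B * h ^ 3) := by
        apply mul_le_mul_of_nonneg_left hd (by positivity)
    _ ≤ (M * Ks * B + 1) * h ^ 3 := by nlinarith [pow_pos hh 3]
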